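/- If a ring R is SSP (the sum of any two direct summands of R_R is a direct summand), then R is right SIP: the intersection of any two direct summands of R as a right R-module is a direct summand. -/

import Mathlib

def IsSummand {R M : Type*} [Ring R] [AddCommGroup M] [Module R M]
    (p : Submodule R M) : Prop :=
  ∃ q : Submodule R M, IsCompl p q

private lemma mul_right_mem' {R : Type*} [Ring R] {p : Submodule Rᵐᵒᵖ R} {x : R} (r : R)
    (h : x ∈ p) : x * r ∈ p := by
  simpa using p.smul_mem (MulOpposite.op r) h

/-- A direct summand of `R` as a right `R`-module is generated by an idempotent:
membership is characterized by `e * x = x`. -/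
private lemma exists_idem' {R : Type*} [Ring R] {p q : Submodule Rᵐᵒᵖ R} (h : IsCompl p q) :
    ∃ e : R, e ∈ p ∧ ∀ x : R, x ∈ p ↔ e * x = x := by
  have h1 : (1 : R) ∈ p ⊔ q := by
    rw [codisjoint_iff.mp h.codisjoint]; trivial
  obtain ⟨e, he, e', he', hee'⟩ := Submodule.mem_sup.mp h1
  refine ⟨e, he, fun x => ⟨fun hx => ?_, fun hx => ?_⟩⟩
  · have hx1 : e' * x ∈ p := by
      have : e' * x = x - e * x := by
        have : (e + e') * x = x := by rw [hee', one_mul]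
        rw [add_mul] at this
        exact (eq_sub_of_add_eq' this).symm ▸ rfl
      rw [this]
      exact p.sub_mem hx (mul_right_mem' x he)
    have hx2 : e' * x ∈ q := mul_right_mem' x he'
    have h0 : e' * x = 0 := Submodule.disjoint_def.mp h.disjoint _ hx1 hx2
    have : (e + e') * x = x := by rw [hee', one_mul]
    rw [add_mul, h0, add_zero] at this
    exact this
  · rw [← hx]; exact mul_right_mem' x he

/-- If `R` is SSP (sums of direct summands of `R_R` are direct summands),
then `R` is right SIP. -/
theorem stmt9 {R : Type*} [Ring R]
    (hSSP : ∀ p q : Submodule Rᵐᵒᵖ R, IsSummand p → IsSummand q → IsSummand (p ⊔ q)) :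
    ∀ p q : Submodule Rᵐᵒᵖ R, IsSummand p → IsSummand q → IsSummand (p ⊓ q) := by
  intro p q hp hq
  obtain ⟨p', hp'⟩ := hp
  obtain ⟨q', hq'⟩ := hq
  obtain ⟨e, hep, he⟩ := exists_idem' hp'
  obtain ⟨f, hfq, hf⟩ := exists_idem' hq'
  have hee : e * e = e := (he e).mp hep
  have hff : f * f = f := (hf f).mp hfq
  -- `a = (1-f)e`; it lies in `p ⊔ q`.
  set a : R := e - f * e with ha
  have hapq : a ∈ p ⊔ q :=
    Submodule.sub_mem _ (Submodule.mem_sup_left hep)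
      (Submodule.mem_sup_right (mul_right_mem' e hfq))
  -- SSP: get a complement `C` of `p ⊔ q` and decompose `1 = u + v + c`.
  obtain ⟨C, hC⟩ := hSSP p q ⟨p', hp'⟩ ⟨q', hq'⟩
  have h1 : (1 : R) ∈ (p ⊔ q) ⊔ C := by
    rw [codisjoint_iff.mp hC.codisjoint]; trivial
  obtain ⟨w, hw, c, hc, hwc⟩ := Submodule.mem_sup.mp h1
  obtain ⟨u, hu, v, hv, huv⟩ := Submodule.mem_sup.mp hw
  have hue : e * u = u := (he u).mp hu
  have hvf : f * v = v := (hf v).mp hv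
  have hsum : u + v + c = 1 := by rw [huv, hwc]
  have key : u * a + v * a + c * a = a := by
    have h2 := congrArg (fun z : R => z * a) hsum
    simpa [add_mul] using h2
  -- `c * a = 0` since it lies in both `p ⊔ q` and `C`.
  have hca0 : c * a = 0 := by
    refine Submodule.disjoint_def.mp hC.disjoint _ ?_ (mul_right_mem' a hc)
    have h3 : c * a = a - (u * a + v * a) := eq_sub_of_add_eq' key
    rw [h3]
    exact Submodule.sub_mem _ hapq
      (Submodule.add_mem _ (Submodule.mem_sup_left (mul_right_mem' a hu))
        (Submodule.mem_sup_right (mul_right_mem' a hv)))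
  have key2 : u * a + v * a = a := by
    have := key; rw [hca0, add_zero] at this; exact this
  -- Regularity: `a * (u * a) = a`.
  have hfa0 : f * a = 0 := by rw [ha, mul_sub, ← mul_assoc, hff, sub_self]
  have hga : (1 - f) * a = a := by rw [sub_mul, one_mul, hfa0, sub_zero]
  have hva : (1 - f) * (v * a) = 0 := by
    rw [sub_mul, one_mul, ← mul_assoc, hvf, sub_self]
  have hua : (1 - f) * (u * a) = a * (u * a) := by
    conv_lhs => rw [← hue]
    rw [mul_assoc e u a, ← mul_assoc (1 - f) e (u * a), sub_mul, one_mul, ← ha]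
  have reg : a * (u * a) = a := by
    have h3 := congrArg (fun z : R => (1 - f) * z) key2
    simp only [mul_add] at h3
    rw [hua, hva, hga, add_zero] at h3
    exact h3
  -- Idempotents `t := u*a`, `n := 1-e`, `s := n + t - n*t`.
  set t : R := u * a with hT
  have htt : t * t = t := by rw [hT, mul_assoc u a (u * a), reg]
  have hae : a * e = a := by rw [ha, sub_mul, mul_assoc f e e, hee]
  have hte : t * e = t := by rw [hT, mul_assoc, hae]
  have hat : a * t = a := reg
  set n : R := 1 - e with hN
  have hnn : n * n = n := by rw [hN, sub_mul, one_mul, mul_sub, mul_one, hee, sub_self, sub_zero]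
  have htn : t * n = 0 := by rw [hN, mul_sub, mul_one, hte, sub_self]
  set s : R := n + t - n * t with hS
  have hns : n * s = n := by
    rw [hS, mul_sub, mul_add, hnn, ← mul_assoc n n t, hnn, add_sub_cancel_right]
  have hts : t * s = t := by
    rw [hS, mul_sub, mul_add, htn, htt, zero_add, ← mul_assoc t n t, htn, zero_mul, sub_zero]
  have hss : s * s = s := by
    nth_rewrite 1 [hS]
    rw [sub_mul, add_mul, hns, hts, mul_assoc n t s, hts, ← hS]
  -- Membership characterization: `x ∈ p ⊓ q ↔ s * x = 0`.
  have char : ∀ x : R, x ∈ p ⊓ q ↔ s * x = 0 := by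
    intro x
    constructor
    · rintro ⟨hxp, hxq⟩
      have hex : e * x = x := (he x).mp hxp
      have hfx : f * x = x := (hf x).mp hxq
      have hnx : n * x = 0 := by rw [hN, sub_mul, one_mul, hex, sub_self]
      have hax : a * x = 0 := by
        rw [ha, sub_mul, hex, mul_assoc, hex, hfx, sub_self]
      have htx : t * x = 0 := by rw [hT, mul_assoc, hax, mul_zero]
      rw [hS, sub_mul, add_mul, hnx, htx, mul_assoc, htx, mul_zero, add_zero, sub_zero]
    · intro hsx
      have hnx : n * x = 0 := by rw [← hns, mul_assoc, hsx, mul_zero]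
      have htx : t * x = 0 := by rw [← hts, mul_assoc, hsx, mul_zero]
      have hex : e * x = x := by
        have : (1 - e) * x = 0 := by rw [← hN]; exact hnx
        rw [sub_mul, one_mul, sub_eq_zero] at this
        exact this.symm
      have hax : a * x = 0 := by rw [← hat, mul_assoc, htx, mul_zero]
      have hfx : f * x = x := by
        have h4 : (1 - f) * x = 0 := by
          rw [← hex, ← mul_assoc, sub_mul, one_mul, ← ha, hax]
        rw [sub_mul, one_mul, sub_eq_zero] at h4
        exact h4.symm
      exact ⟨(he x).mpr hex, (hf x).mpr hfx⟩
  -- The complement of `p ⊓ q` is the right ideal generated by `s`.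
  refine ⟨Submodule.span Rᵐᵒᵖ {s}, ?_, ?_⟩
  · refine Submodule.disjoint_def.mpr fun x hx1 hx2 => ?_
    obtain ⟨r, rfl⟩ := Submodule.mem_span_singleton.mp hx2
    have h5 : s * (r • s) = 0 := (char _).mp hx1
    have h6 : r • s = s * MulOpposite.unop r := rfl
    rw [h6, ← mul_assoc, hss] at h5
    rw [h6, h5]
  · rw [codisjoint_iff]
    refine Submodule.eq_top_iff'.mpr fun x => Submodule.mem_sup.mpr ?_
    refine ⟨x - s * x, ?_, s * x, ?_, by abel⟩
    · refine (char _).mpr ?_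
      rw [mul_sub, ← mul_assoc, hss, sub_self]
    · exact Submodule.mem_span_singleton.mpr ⟨MulOpposite.op x, rfl⟩
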